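/- Consider exponential last-passage percolation with the flat substrate whose concave corners are the anti-diagonal {(z,−z) : z ∈ ℤ}. For n ≥ 1 let Z(n) ∈ ℤ be defined by Φ(n,n) = (Z(n), −Z(n)), the location of the root of the point (n,n). Then for all integers m, n ≥ 1, P(|Z(n)| < m) ≤ 2m · P(H₀ ≥ n). -/

import Mathlib

open MeasureTheory ProbabilityTheory Filter Set

noncomputable section

namespace GF

/-- A lattice point of `ℤ²`. -/
abbrev Pt := ℤ × ℤ

/-- The unit vector `e₁ = (1,0)`. -/
def e1 : Pt := (1, 0)
/-- The unit vector `e₂ = (0,1)`. -/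
def e2 : Pt := (0, 1)
/-- The diagonal vector `d = (1,1)`. -/
def dd : Pt := (1, 1)

/-- Strict coordinatewise inequality on `ℤ²`. -/
def ltc (u v : Pt) : Prop := u.1 < v.1 ∧ u.2 < v.2

/-- An up-right (unit steps `e₁`, `e₂`) lattice path from `x` to `y`. -/
structure URPath (x y : Pt) where
  len : ℕ
  pts : ℕ → Pt
  first : pts 0 = x
  last : pts len = y
  step : ∀ i < len, pts (i + 1) = pts i + e1 ∨ pts (i + 1) = pts i + e2

/-- The weight of an up-right path: the sum of the weights of its vertices. -/
def URPath.weight (W : Pt → ℝ) {x y : Pt} (γ : URPath x y) : ℝ :=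
  ∑ i ∈ Finset.range (γ.len + 1), W (γ.pts i)

/-- The last-passage time between `x` and `y`. -/
def lpt (W : Pt → ℝ) (x y : Pt) : ℝ :=
  sSup {t | ∃ γ : URPath x y, γ.weight W = t}

/-- The family `W` is i.i.d. exponential of rate `r` under `P`. -/
def IIDExp {Ω : Type*} {ι : Type*} [MeasurableSpace Ω] (P : Measure Ω)
    (W : ι → Ω → ℝ) (r : ℝ) : Prop :=
  iIndepFun W P ∧ ∀ i, Measure.map (W i) P = expMeasure r

/-- A substrate: a bi-infinite down-right path through the origin. -/
def IsSubstrate (φ : ℤ → Pt) : Prop :=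
  φ 0 = (0, 0) ∧ ∀ z : ℤ, φ (z + 1) = φ z + e1 ∨ φ (z + 1) = φ z - e2

/-- The substrate `φ` has a macroscopic concave wedge, with asymptotic slopes `-lm` at `-∞`
and `-lp` at `+∞`. -/
def HasConcaveWedge (φ : ℤ → Pt) (lm lp : ℝ) : Prop :=
  Tendsto (fun z : ℤ => ((φ z).2 : ℝ) / ((φ z).1 : ℝ)) atBot (nhds (-lm)) ∧
    Tendsto (fun z : ℤ => ((φ z).2 : ℝ) / ((φ z).1 : ℝ)) atTop (nhds (-lp))

/-- `z` is (the index of) a microscopic concave corner of the substrate `φ`: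
`φ_z - φ_{z-1} = -e₂` and `φ_{z+1} - φ_z = e₁`. -/
def IsCornerIdx (φ : ℤ → Pt) (z : ℤ) : Prop :=
  φ z = φ (z - 1) - e2 ∧ φ (z + 1) = φ z + e1

/-- The growth region of the substrate `φ`. -/
def growth (φ : ℤ → Pt) : Set Pt := {x | ∃ z, ltc (φ z) x}

/-- The corner `φ z` is a root of the point `x`: among all concave corners `z'` with
`φ z' < x` it maximises the last-passage time `L(φ z' + d, x)`. -/
def IsRoot (W : Pt → ℝ) (φ : ℤ → Pt) (z : ℤ) (x : Pt) : Prop :=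
  IsCornerIdx φ z ∧ ltc (φ z) x ∧
    ∀ z', IsCornerIdx φ z' → ltc (φ z') x → lpt W (φ z' + dd) x ≤ lpt W (φ z + dd) x

/-- The corner `φ z` is the asymptotic root in the direction `(1, a)`: for every sequence of
points of the growth region going to infinity with asymptotic slope `a`, it is eventually
its root. -/
def IsAsymRoot (W : Pt → ℝ) (φ : ℤ → Pt) (a : ℝ) (z : ℤ) : Prop :=
  IsCornerIdx φ z ∧
    ∀ x : ℕ → Pt, (∀ n, x n ∈ growth φ) →
      Tendsto (fun n => (x n).1) atTop atTop →
      Tendsto (fun n => (x n).2) atTop atTop →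
      Tendsto (fun n => ((x n).2 : ℝ) / ((x n).1 : ℝ)) atTop (nhds a) →
      ∀ᶠ n in atTop, IsRoot W φ z (x n)

/-- `ρ_a = √a / (1 + √a)`. -/
def rho (a : ℝ) : ℝ := Real.sqrt a / (1 + Real.sqrt a)

/-- The increments `X_z^{a,φ}` of the substrate random walk, built from the two independent
exponential families `E` (rate `ρ_a`, used on down/up steps) and `E'` (rate `1 - ρ_a`, used
with a minus sign on right/left steps). -/
def inc (φ : ℤ → Pt) (E E' : ℤ → ℝ) (z : ℤ) : ℝ :=
  if 1 ≤ z then (if φ z = φ (z - 1) + e1 then -E' z else E z)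
  else (if φ (z - 1) = φ z - e1 then E' z else -E z)

/-- The two-sided walk with increments `X`: `S 0 = 0`, `S z = ∑_{k=1}^z X k` for `z > 0` and
`S z = ∑_{k=z}^{-1} X (k+1)` for `z < 0`. -/
def walk (X : ℤ → ℝ) (z : ℤ) : ℝ :=
  if 0 ≤ z then ∑ k ∈ Finset.range z.toNat, X ((k : ℤ) + 1)
  else ∑ k ∈ Finset.range (-z).toNat, X (-(k : ℤ))

/-- The law of the difference `E - F` of two independent exponential random variables of
rates `r1` and `r2`. -/
def diffExp (r1 r2 : ℝ) : Measure ℝ :=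
  Measure.map (fun p : ℝ × ℝ => p.1 - p.2) ((expMeasure r1).prod (expMeasure r2))

/-- The Bernoulli substrate built from the step indicators `U`: `φ₋₁ = e₂`, `φ₀ = 0`,
`φ₁ = e₁`; for `z ≥ 1` the step `φ_{z+1} - φ_z` is `-e₂` when the corresponding indicator is
`true` (else `e₁`), and for `z ≤ -1` the step `φ_{z-1} - φ_z` is `e₂` when the corresponding
indicator is `true` (else `-e₁`). -/
def bsub (U : ℤ → Bool) : ℤ → Pt := fun z =>
  if 1 ≤ z then
    (1, 0) + ∑ k ∈ Finset.range (z - 1).toNat, (if U ((k : ℤ) + 2) then -(0, 1) else ((1, 0) : Pt))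
  else if z = 0 then 0
  else (0, 1) + ∑ k ∈ Finset.range (-z - 1).toNat, (if U (-(k : ℤ) - 2) then (0, 1) else -((1, 0) : Pt))

/-- The step indicators of a Bernoulli substrate with parameters `p₊` (on the right) and
`p₋` (on the left): independent, `P (U z = true) = p₊` for `z ≥ 2` and `= p₋` for `z ≤ -2`. -/
def BernoulliSteps {Ω : Type*} [MeasurableSpace Ω] (P : Measure Ω)
    (U : ℤ → Ω → Bool) (pp pm : ℝ) : Prop :=
  iIndepFun U P ∧
    (∀ z : ℤ, 2 ≤ z → P {ω | U z ω = true} = ENNReal.ofReal pp) ∧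
    (∀ z : ℤ, z ≤ -2 → P {ω | U z ω = true} = ENNReal.ofReal pm)

/-- The substrate walk of the Bernoulli substrate model, as a function of the sample point. -/
def bWalk {Ω : Type*} (U : ℤ → Ω → Bool) (E E' : ℤ → Ω → ℝ) (ω : Ω) : ℤ → ℝ :=
  walk (inc (bsub fun z => U z ω) (fun z => E z ω) fun z => E' z ω)

/-- The periodic substrate with parameters `k₊`, `k₋`: for `z > 0` it repeatedly takes `k₊`
steps `e₁` followed by one step `-e₂`, and for `z < 0` it repeatedly takes `k₋` steps up
followed by one step left. Its concave corners are the indices `n (k₊ + 1)`, `n ≥ 0`, and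
`-n (k₋ + 1)`, `n ≥ 0`. -/
def psub (kp km : ℕ) : ℤ → Pt := fun z =>
  if 0 ≤ z then (z - z / (kp + 1), -(z / (kp + 1)))
  else (-((-z) / (km + 1)), (-z) - (-z) / (km + 1))

/-- The finite rooted substrate with parameter `m`: down the vertical line `x = -1` (so that
`φ_z = |z+1| e₂ - e₁` for `z ≤ -2`), `φ₋₁ = e₂`, then `φ_z = z e₁` for `0 ≤ z ≤ m`, one step
down, and then right along the line `y = -1`.  It has exactly three concave corners, at
`(-1,1)`, `(0,0)` and `(m,-1)`. -/
def frs (m : ℕ) : ℤ → Pt := fun z =>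
  if z ≤ -2 then (-1, -z - 1)
  else if z = -1 then (0, 1)
  else if z ≤ (m : ℤ) then (z, 0)
  else (z - 1, -1)

/-- The flat substrate, whose set of concave corners is the antidiagonal `{(z,-z) : z ∈ ℤ}`;
the corner `(z, -z)` has index `2 z`. -/
def flat : ℤ → Pt := fun w =>
  if 2 ∣ w then (w / 2, -(w / 2)) else ((w + 1) / 2, (-(w - 1)) / 2)

/-- For the flat substrate: the geodesic tree rooted at the corner `(z, -z)` has height at
least `n`, i.e. it contains a point of the line `x(1) + x(2) = n + 1`. -/
def HeightGe (W : Pt → ℝ) (z : ℤ) (n : ℕ) : Prop :=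
  ∃ x : Pt, x.1 + x.2 = (n : ℤ) + 1 ∧ IsRoot W flat (2 * z) x

/-- The cumulative profile of a weighted substrate: `ν(0) = 0`, `ν(k) = ∑_{i=1}^k ν_i` for
`k > 0` and `ν(k) = -∑_{i=k}^{-1} ν_i` for `k < 0`. -/
def cum (ν : ℤ → ℝ) (k : ℤ) : ℝ :=
  if 0 ≤ k then ∑ i ∈ Finset.range k.toNat, ν ((i : ℤ) + 1)
  else -∑ i ∈ Finset.range (-k).toNat, ν (k + (i : ℤ))

/-- In the weighted substrate model, `k` is a root of the point `(x, n)`: it maximises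
`j ↦ ν(j) + L((j,1),(x,n))` over `j ≤ x`. -/
def IsKRoot (W : Pt → ℝ) (ν : ℤ → ℝ) (k x n : ℤ) : Prop :=
  k ≤ x ∧ ∀ j ≤ x, cum ν j + lpt W (j, 1) (x, n) ≤ cum ν k + lpt W (k, 1) (x, n)

/-- In the weighted substrate model, `k` is the asymptotic root in the direction `(1, a)`. -/
def IsAsymKRoot (W : Pt → ℝ) (ν : ℤ → ℝ) (a : ℝ) (k : ℤ) : Prop :=
  ∀ x t : ℕ → ℤ, (∀ n, 1 ≤ t n) →
    Tendsto x atTop atTop → Tendsto t atTop atTop →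
    Tendsto (fun n => (t n : ℝ) / (x n : ℝ)) atTop (nhds a) →
    ∀ᶠ n in atTop, IsKRoot W ν k (x n) (t n)

end GF

open GF Set

namespace GFAux

lemma flat_even (z : ℤ) : flat (2 * z) = (z, -z) := by
  simp [flat, Int.mul_ediv_cancel_left, Dvd.intro z rfl]

lemma flat_corner_iff (w : ℤ) : IsCornerIdx flat w ↔ 2 ∣ w := by
  unfold IsCornerIdx flat e1 e2
  constructor
  · intro ⟨h1, h2⟩
    by_contra hw
    rw [if_neg hw] at h1
    have hd : 2 ∣ w - 1 := by omega
    rw [if_pos hd] at h1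
    rw [Prod.ext_iff] at h1
    simp at h1
    omega
  · intro hw
    have h1 : 2 ∣ w + 1 ↔ False := by simp; omega
    have h2 : ¬ (2 ∣ w - 1) := by omega
    rw [if_pos hw, if_neg h2, if_neg (by omega : ¬ (2 ∣ w + 1))]
    rw [Prod.ext_iff, Prod.ext_iff]
    simp [Prod.fst_sub, Prod.snd_sub]
    omega

end GFAux
open GF Set

namespace GFAux

/-- point sequence from step booleans -/
def ptSeq (x : Pt) (b : ℕ → Bool) : ℕ → Pt
  | 0 => x
  | (i+1) => ptSeq x b i + (if b i then e1 else e2)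

lemma ptSeq_congr (x : Pt) (b b' : ℕ → Bool) (i : ℕ) (h : ∀ j < i, b j = b' j) :
    ptSeq x b i = ptSeq x b' i := by
  induction i with
  | zero => rfl
  | succ i ih =>
    simp only [ptSeq, ih (fun j hj => h j (by omega)), h i (by omega)]

def wSum (W : Pt → ℝ) (x : Pt) (b : ℕ → Bool) (L : ℕ) : ℝ :=
  ∑ i ∈ Finset.range (L + 1), W (ptSeq x b i)

lemma ptSeq_level (x : Pt) (b : ℕ → Bool) (i : ℕ) :
    (ptSeq x b i).1 + (ptSeq x b i).2 = x.1 + x.2 + i := by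
  induction i with
  | zero => simp [ptSeq]
  | succ i ih => cases hb : b i <;> simp [ptSeq, hb, e1, e2] <;> omega

lemma path_level {x y : Pt} (γ : URPath x y) (i : ℕ) (hi : i ≤ γ.len) :
    (γ.pts i).1 + (γ.pts i).2 = x.1 + x.2 + i := by
  induction i with
  | zero => simp [γ.first]
  | succ i ih =>
    have hl := ih (by omega)
    rcases γ.step i (by omega) with h | h <;> rw [h] <;> simp [e1, e2] <;> omega

lemma path_len_eq {x y : Pt} (γ : URPath x y) :
    (x.1 + x.2) + (γ.len : ℤ) = y.1 + y.2 := by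
  have := path_level γ γ.len le_rfl
  rw [γ.last] at this; omega

lemma path_mono {x y : Pt} (γ : URPath x y) {i j : ℕ} (hij : i ≤ j) (hj : j ≤ γ.len) :
    (γ.pts i).1 ≤ (γ.pts j).1 ∧ (γ.pts i).2 ≤ (γ.pts j).2 := by
  induction j with
  | zero =>
    have : i = 0 := by omega
    subst this; exact ⟨le_rfl, le_rfl⟩
  | succ j ih =>
    rcases Nat.eq_or_lt_of_le hij with rfl | hlt
    · exact ⟨le_rfl, le_rfl⟩
    · have h' := ih (by omega) (by omega)
      rcases γ.step j (by omega) with h | h <;> rw [h] <;> simp [e1, e2] <;> omega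

/-- encode a path into booleans -/
lemma path_code {x y : Pt} (γ : URPath x y) :
    ∃ b : ℕ → Bool, ∀ i ≤ γ.len, ptSeq x b i = γ.pts i := by
  refine ⟨fun i => decide (γ.pts (i + 1) = γ.pts i + e1), ?_⟩
  intro i hi
  induction i with
  | zero => simp [ptSeq, γ.first]
  | succ i ih =>
    have hihi := ih (by omega)
    rcases γ.step i (by omega) with h | h
    · simp [ptSeq, hihi, h]
    · have hne : γ.pts (i + 1) ≠ γ.pts i + e1 := by
        rw [h]; simp [e1, e2, Prod.ext_iff]
      have hd : decide (γ.pts (i + 1) = γ.pts i + e1) = false := decide_eq_false hne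
      simp only [ptSeq, hihi, hd, Bool.false_eq_true, if_false]
      exact h.symm

/-- decode booleans into a path -/
def ofSeq (x y : Pt) (b : ℕ → Bool) (L : ℕ) (h : ptSeq x b L = y) : URPath x y where
  len := L
  pts := ptSeq x b
  first := rfl
  last := h
  step := fun i _ => by cases hb : b i <;> simp [ptSeq, hb]

lemma ofSeq_weight (W : Pt → ℝ) (x y : Pt) (b : ℕ → Bool) (L : ℕ) (h : ptSeq x b L = y) :
    (ofSeq x y b L h).weight W = wSum W x b L := rfl

def pathLen (x y : Pt) : ℕ := (y.1 + y.2 - (x.1 + x.2)).toNat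

def extB (L : ℕ) (e : Fin L → Bool) : ℕ → Bool := fun i => if h : i < L then e ⟨i, h⟩ else false

/-- the set of path weights equals a finite image -/
lemma wset_eq (W : Pt → ℝ) (x y : Pt) :
    {t | ∃ γ : URPath x y, γ.weight W = t} =
      (fun e : Fin (pathLen x y) → Bool => wSum W x (extB _ e) (pathLen x y)) ''
        {e | ptSeq x (extB _ e) (pathLen x y) = y} := by
  ext t
  constructor
  · rintro ⟨γ, rfl⟩
    have hlen : γ.len = pathLen x y := by
      have := path_len_eq γ; unfold pathLen; omega
    obtain ⟨b, hb⟩ := path_code γ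
    refine ⟨fun i => b i, ?_, ?_⟩
    · show ptSeq x (extB _ _) _ = y
      rw [ptSeq_congr x _ b _ (fun j hj => by simp [extB, hj])]
      rw [← hlen, hb γ.len le_rfl, γ.last]
    · show wSum W x _ _ = γ.weight W
      unfold wSum URPath.weight
      rw [← hlen]
      refine Finset.sum_congr rfl fun i hi => ?_
      simp only [Finset.mem_range] at hi
      rw [ptSeq_congr x _ b _ (fun j hj => by simp [extB]; omega), hb i (by omega)]
  · rintro ⟨e, he, rfl⟩
    exact ⟨ofSeq x y _ _ he, rfl⟩

lemma wset_finite (W : Pt → ℝ) (x y : Pt) :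
    {t | ∃ γ : URPath x y, γ.weight W = t}.Finite := by
  rw [wset_eq]; exact (Set.toFinite _).image _

lemma weight_le_lpt (W : Pt → ℝ) {x y : Pt} (γ : URPath x y) : γ.weight W ≤ lpt W x y :=
  le_csSup (wset_finite W x y).bddAbove ⟨γ, rfl⟩

lemma lpt_attained (W : Pt → ℝ) {x y : Pt} (γ0 : URPath x y) :
    ∃ γ : URPath x y, γ.weight W = lpt W x y := by
  have h := Set.Nonempty.csSup_mem (s := {t | ∃ γ : URPath x y, γ.weight W = t})
    ⟨γ0.weight W, γ0, rfl⟩ (wset_finite W x y)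
  exact h

end GFAux
namespace GFAux
open GF Set

/-- componentwise order -/
def lec (u v : Pt) : Prop := u.1 ≤ v.1 ∧ u.2 ≤ v.2

lemma exists_path {x y : Pt} (h : lec x y) : Nonempty (URPath x y) := by
  obtain ⟨h1, h2⟩ := h
  set dx := (y.1 - x.1).toNat with hdx
  set dy := (y.2 - x.2).toNat with hdy
  set b : ℕ → Bool := fun i => decide (i < dx) with hb
  have hbt : ∀ i, b i = decide (i < dx) := fun i => rfl
  have key : ∀ i, ptSeq x b i =
      if i ≤ dx then (x.1 + i, x.2) else (x.1 + dx, x.2 + (i - dx : ℕ)) := by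
    intro i
    induction i with
    | zero => simp [ptSeq]
    | succ i ih =>
      by_cases hi : i < dx
      · have hbi : b i = true := by simp [hbt, hi]
        rw [ptSeq, ih, hbi, if_pos rfl]
        split_ifs <;> (apply Prod.ext <;> simp [e1] <;> omega)
      · have hbi : b i = false := by simp [hbt]; omega
        rw [ptSeq, ih, hbi, if_neg Bool.false_ne_true]
        split_ifs <;> (apply Prod.ext <;> simp [e2] <;> omega)
  refine ⟨ofSeq x y b (dx + dy) ?_⟩
  rw [key]
  split_ifs <;> (apply Prod.ext <;> simp <;> omega)

def cpts {a b c : Pt} (γ1 : URPath a b) (γ2 : URPath b c) : ℕ → Pt :=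
  fun i => if i ≤ γ1.len then γ1.pts i else γ2.pts (i - γ1.len)

/-- concatenation -/
def concatP {a b c : Pt} (γ1 : URPath a b) (γ2 : URPath b c) : URPath a c where
  len := γ1.len + γ2.len
  pts := cpts γ1 γ2
  first := by
    show (if 0 ≤ γ1.len then γ1.pts 0 else γ2.pts (0 - γ1.len)) = a
    rw [if_pos (Nat.zero_le _), γ1.first]
  last := by
    show (if γ1.len + γ2.len ≤ γ1.len then γ1.pts (γ1.len + γ2.len)
        else γ2.pts (γ1.len + γ2.len - γ1.len)) = c
    by_cases h : γ2.len = 0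
    · rw [if_pos (by omega)]
      have h2 : γ2.pts γ2.len = c := γ2.last
      rw [h] at h2
      rw [h, Nat.add_zero, γ1.last, ← γ2.first]
      exact h2
    · rw [if_neg (by omega), Nat.add_sub_cancel_left, γ2.last]
  step := by
    intro i hi
    show cpts γ1 γ2 (i + 1) = cpts γ1 γ2 i + e1 ∨ cpts γ1 γ2 (i + 1) = cpts γ1 γ2 i + e2
    unfold cpts
    by_cases h1 : i + 1 ≤ γ1.len
    · rw [if_pos h1, if_pos (by omega)]
      exact γ1.step i (by omega)
    · rw [if_neg h1]
      have hpi : (if i ≤ γ1.len then γ1.pts i else γ2.pts (i - γ1.len)) = γ2.pts (i - γ1.len) := by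
        by_cases h2 : i ≤ γ1.len
        · have h4 : i = γ1.len := by omega
          subst h4
          rw [if_pos le_rfl, Nat.sub_self, γ1.last]
          exact γ2.first.symm
        · rw [if_neg h2]
      rw [hpi]
      have h3 : i + 1 - γ1.len = (i - γ1.len) + 1 := by omega
      rw [h3]
      exact γ2.step (i - γ1.len) (by omega)

lemma concatP_weight (W : Pt → ℝ) {a b c : Pt} (γ1 : URPath a b) (γ2 : URPath b c) :
    (concatP γ1 γ2).weight W = γ1.weight W + γ2.weight W - W b := by
  have hcw : (concatP γ1 γ2).weight W = ∑ i ∈ Finset.range (γ1.len + γ2.len + 1),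
      W (if i ≤ γ1.len then γ1.pts i else γ2.pts (i - γ1.len)) := rfl
  rw [hcw]
  have hsplit : γ1.len + γ2.len + 1 = (γ1.len + 1) + γ2.len := by omega
  rw [hsplit, Finset.sum_range_add]
  have hA : ∑ i ∈ Finset.range (γ1.len + 1),
      W (if i ≤ γ1.len then γ1.pts i else γ2.pts (i - γ1.len)) = γ1.weight W := by
    refine Finset.sum_congr rfl fun i hi => ?_
    simp only [Finset.mem_range] at hi
    rw [if_pos (by omega)]
  have hB : ∑ i ∈ Finset.range γ2.len,
      W (if γ1.len + 1 + i ≤ γ1.len then γ1.pts (γ1.len + 1 + i)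
        else γ2.pts (γ1.len + 1 + i - γ1.len)) = γ2.weight W - W b := by
    have h2 : γ2.weight W = W b + ∑ i ∈ Finset.range γ2.len, W (γ2.pts (i + 1)) := by
      unfold URPath.weight
      rw [Finset.sum_range_succ', γ2.first, add_comm]
    rw [h2, add_sub_cancel_left]
    refine Finset.sum_congr rfl fun i hi => ?_
    rw [if_neg (by omega)]
    congr 2
    omega
  rw [hA, hB]
  ring

lemma lpt_superadd (W : Pt → ℝ) {a b c : Pt} (hab : lec a b) (hbc : lec b c) :
    lpt W a b + lpt W b c - W b ≤ lpt W a c := by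
  obtain ⟨γ1, hγ1⟩ := lpt_attained W (exists_path hab).some
  obtain ⟨γ2, hγ2⟩ := lpt_attained W (exists_path hbc).some
  calc lpt W a b + lpt W b c - W b = (concatP γ1 γ2).weight W := by
        rw [concatP_weight, hγ1, hγ2]
    _ ≤ lpt W a c := weight_le_lpt W _

def preP {a c : Pt} (γ : URPath a c) (k : ℕ) (hk : k ≤ γ.len) : URPath a (γ.pts k) :=
  ⟨k, γ.pts, γ.first, rfl, fun i hi => γ.step i (by omega)⟩

def sufP {a c : Pt} (γ : URPath a c) (k : ℕ) (hk : k ≤ γ.len) : URPath (γ.pts k) c :=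
  ⟨γ.len - k, fun i => γ.pts (k + i), by simp, by
    have h2 : k + (γ.len - k) = γ.len := by omega
    show γ.pts (k + (γ.len - k)) = c
    rw [h2, γ.last], fun i hi => by
    have h2 : k + (i + 1) = (k + i) + 1 := by omega
    show γ.pts (k + (i + 1)) = γ.pts (k + i) + e1 ∨ γ.pts (k + (i + 1)) = γ.pts (k + i) + e2
    rw [h2]
    exact γ.step (k + i) (by omega)⟩

/-- splitting at an intermediate point of a maximal path -/
lemma lpt_split (W : Pt → ℝ) {a c : Pt} (γ : URPath a c) (k : ℕ) (hk : k ≤ γ.len)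
    (hmax : γ.weight W = lpt W a c) :
    lpt W a c ≤ lpt W a (γ.pts k) + lpt W (γ.pts k) c - W (γ.pts k) := by
  have hpw : (preP γ k hk).weight W = ∑ i ∈ Finset.range (k + 1), W (γ.pts i) := rfl
  have hsw : (sufP γ k hk).weight W
      = ∑ i ∈ Finset.range (γ.len - k + 1), W (γ.pts (k + i)) := rfl
  have hw : γ.weight W = (preP γ k hk).weight W + (sufP γ k hk).weight W - W (γ.pts k) := by
    rw [hpw, hsw]
    unfold URPath.weight
    have hsplit : γ.len + 1 = (k + 1) + (γ.len - k) := by omega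
    rw [hsplit, Finset.sum_range_add]
    have h2 : (∑ i ∈ Finset.range (γ.len - k + 1), W (γ.pts (k + i)))
        = (∑ i ∈ Finset.range (γ.len - k), W (γ.pts (k + 1 + i))) + W (γ.pts k) := by
      rw [Finset.sum_range_succ']
      congr 1
      · refine Finset.sum_congr rfl fun i hi => ?_
        congr 2; omega
    rw [h2]
    ring
  rw [← hmax, hw]
  linarith [weight_le_lpt W (preP γ k hk), weight_le_lpt W (sufP γ k hk)]

end GFAux
namespace GFAux
open GF Set

lemma flat_dd (w : ℤ) : flat (2 * w) + dd = ((w + 1, -w + 1) : Pt) := by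
  rw [flat_even]
  simp [dd, Prod.ext_iff]

lemma root_to_height (W : Pt → ℝ) (z : ℤ) (n : ℕ) (hn : 1 ≤ n)
    (h : IsRoot W flat (2 * z) ((n : ℤ), (n : ℤ))) : HeightGe W z n := by
  obtain ⟨hcor, hltc, hmaxim⟩ := h
  rw [flat_even] at hltc
  obtain ⟨hltc1, hltc2⟩ := hltc
  simp only at hltc1 hltc2
  have huleq : lec ((z + 1, -z + 1) : Pt) ((n : ℤ), (n : ℤ)) := ⟨by omega, by omega⟩
  obtain ⟨γ, hγ⟩ := lpt_attained W (exists_path huleq).some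
  have hlen := path_len_eq γ
  simp only at hlen
  have hk : n - 1 ≤ γ.len := by omega
  set y := γ.pts (n - 1) with hy
  have hylevel : y.1 + y.2 = (n : ℤ) + 1 := by
    have := path_level γ (n - 1) hk
    simp only at this
    rw [← hy] at this
    omega
  have hyu : lec (z + 1, -z + 1) y := by
    have := path_mono γ (Nat.zero_le (n - 1)) hk
    rw [γ.first] at this
    exact this
  have hyx : lec y ((n : ℤ), (n : ℤ)) := by
    have := path_mono γ hk le_rfl
    rw [γ.last] at this
    exact this
  refine ⟨y, hylevel, hcor, ?_, ?_⟩
  · rw [flat_even]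
    exact ⟨by have := hyu.1; simp only at this ⊢; omega,
      by have := hyu.2; simp only at this ⊢; omega⟩
  · intro w' hcor' hltc'
    obtain ⟨z', rfl⟩ : ∃ z', w' = 2 * z' := (flat_corner_iff w').mp hcor'
    rw [flat_even] at hltc'
    obtain ⟨hl1, hl2⟩ := hltc'
    simp only at hl1 hl2
    rw [flat_dd, flat_dd]
    by_contra hlt
    push_neg at hlt
    have h1 : lpt W (z + 1, -z + 1) ((n : ℤ), (n : ℤ))
        ≤ lpt W (z + 1, -z + 1) y + lpt W y ((n : ℤ), (n : ℤ)) - W y := by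
      rw [hy]
      exact lpt_split W γ (n - 1) hk hγ
    have h2 : lpt W (z' + 1, -z' + 1) y + lpt W y ((n : ℤ), (n : ℤ)) - W y
        ≤ lpt W (z' + 1, -z' + 1) ((n : ℤ), (n : ℤ)) :=
      lpt_superadd W ⟨by simp only; omega, by simp only; omega⟩ hyx
    have h3 : lpt W (z' + 1, -z' + 1) ((n : ℤ), (n : ℤ))
        ≤ lpt W (z + 1, -z + 1) ((n : ℤ), (n : ℤ)) := by
      have hltcx : ltc (flat (2 * z')) ((n : ℤ), (n : ℤ)) := by
        rw [flat_even]
        have := hyx.1; have := hyx.2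
        exact ⟨by simp only at *; omega, by simp only at *; omega⟩
      have := hmaxim (2 * z') hcor' hltcx
      rwa [flat_dd, flat_dd] at this
    linarith

end GFAux
namespace GFAux
open GF Set

lemma lpt_shift (f : Pt → ℝ) (c u v : Pt) :
    lpt (fun p => f (p + c)) u v = lpt f (u + c) (v + c) := by
  unfold lpt
  congr 1
  ext t
  constructor
  · rintro ⟨γ, rfl⟩
    refine ⟨⟨γ.len, fun i => γ.pts i + c, by show γ.pts 0 + c = u + c; rw [γ.first],
        by show γ.pts γ.len + c = v + c; rw [γ.last], fun i hi => ?_⟩, ?_⟩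
    · rcases γ.step i hi with h | h
      · left; show γ.pts (i + 1) + c = γ.pts i + c + e1; rw [h, add_right_comm]
      · right; show γ.pts (i + 1) + c = γ.pts i + c + e2; rw [h, add_right_comm]
    · rfl
  · rintro ⟨γ, rfl⟩
    refine ⟨⟨γ.len, fun i => γ.pts i - c, by show γ.pts 0 - c = u; rw [γ.first]; abel,
        by show γ.pts γ.len - c = v; rw [γ.last]; abel, fun i hi => ?_⟩, ?_⟩
    · rcases γ.step i hi with h | h
      · left; show γ.pts (i + 1) - c = γ.pts i - c + e1; rw [h]; abel
      · right; show γ.pts (i + 1) - c = γ.pts i - c + e2; rw [h]; abel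
    · show ∑ i ∈ Finset.range (γ.len + 1), f (γ.pts i - c + c) = URPath.weight f γ
      refine Finset.sum_congr rfl fun i _ => ?_
      rw [sub_add_cancel]

lemma flat_add (a s : ℤ) : flat (2 * a) + ((s, -s) : Pt) = flat (2 * (a + s)) := by
  rw [flat_even, flat_even]
  simp [Prod.ext_iff]
  ring

lemma isRoot_shift (f : Pt → ℝ) (s w : ℤ) (x : Pt) (h : IsRoot f flat (2 * w) x) :
    IsRoot (fun p => f (p + ((s, -s) : Pt))) flat (2 * (w - s)) (x - (s, -s)) := by
  obtain ⟨hcor, hltc, hmax⟩ := h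
  rw [flat_even] at hltc
  obtain ⟨h1, h2⟩ := hltc
  simp only at h1 h2
  refine ⟨(flat_corner_iff _).mpr ⟨w - s, rfl⟩, ?_, ?_⟩
  · rw [flat_even]
    constructor <;> simp only [Prod.fst_sub, Prod.snd_sub] <;> omega
  · intro w' hcor' hltc'
    obtain ⟨z', rfl⟩ : ∃ z', w' = 2 * z' := (flat_corner_iff w').mp hcor'
    rw [flat_even] at hltc'
    obtain ⟨hl1, hl2⟩ := hltc'
    simp only [Prod.fst_sub, Prod.snd_sub] at hl1 hl2
    rw [lpt_shift, lpt_shift, sub_add_cancel]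
    have key : ∀ a : ℤ, flat (2 * a) + dd + ((s, -s) : Pt) = flat (2 * (a + s)) + dd := by
      intro a
      rw [add_right_comm, flat_add]
    rw [key, key]
    have hww : w - s + s = w := by ring
    rw [hww]
    apply hmax
    · exact (flat_corner_iff _).mpr ⟨z' + s, rfl⟩
    · rw [flat_even]
      constructor <;> simp only <;> omega

lemma heightGe_shift (f : Pt → ℝ) (z : ℤ) (n : ℕ) :
    HeightGe f z n ↔ HeightGe (fun p => f (p + ((z, -z) : Pt))) 0 n := by
  constructor
  · rintro ⟨x, hx, hroot⟩
    have h := isRoot_shift f z z x hroot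
    rw [sub_self] at h
    refine ⟨x - (z, -z), ?_, h⟩
    simp only [Prod.fst_sub, Prod.snd_sub]
    omega
  · rintro ⟨x, hx, hroot⟩
    have h := isRoot_shift (fun p => f (p + ((z, -z) : Pt))) (-z) 0 x hroot
    have hz : (0 : ℤ) - -z = z := by ring
    rw [hz] at h
    have hfun : (fun p : Pt => f (p + ((-z : ℤ), -(-z : ℤ)) + (z, -z))) = f := by
      funext p
      congr 1
      apply Prod.ext <;> simp
    rw [hfun] at h
    refine ⟨x - ((-z : ℤ), -(-z : ℤ)), ?_, h⟩
    simp only [Prod.fst_sub, Prod.snd_sub]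
    omega

end GFAux
namespace GFAux
open GF Set MeasureTheory

lemma measurable_sup' {α ι : Type*} [MeasurableSpace α] (s : Finset ι) (H : s.Nonempty)
    (g : ι → α → ℝ) (hg : ∀ i, Measurable (g i)) :
    Measurable fun a => s.sup' H fun i => g i a := by
  induction H using Finset.Nonempty.cons_induction with
  | singleton i => simpa using hg i
  | cons a s ha hs ih =>
    have : (fun x => (Finset.cons a s ha).sup' (by simp) fun i => g i x)
        = fun x => (g a x) ⊔ (s.sup' hs fun i => g i x) := by
      funext x; rw [Finset.sup'_cons]
    rw [this]
    exact (hg a).sup ih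

lemma measurable_wSum (u : Pt) (b : ℕ → Bool) (L : ℕ) :
    Measurable fun f : Pt → ℝ => wSum f u b L := by
  unfold wSum
  exact Finset.measurable_sum _ fun i _ => measurable_pi_apply _

lemma measurable_lpt (u v : Pt) : Measurable fun f : Pt → ℝ => lpt f u v := by
  have hrw : (fun f : Pt → ℝ => lpt f u v) = fun f => sSup
      ((fun e : Fin (pathLen u v) → Bool => wSum f u (extB _ e) (pathLen u v)) ''
        {e | ptSeq u (extB _ e) (pathLen u v) = v}) := by
    funext f
    unfold lpt
    rw [wset_eq]
  rw [hrw]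
  set B := {e : Fin (pathLen u v) → Bool | ptSeq u (extB _ e) (pathLen u v) = v} with hB
  by_cases hne : B.Nonempty
  · have hne' : B.toFinset.Nonempty := by rwa [Set.toFinset_nonempty]
    have h2 : ∀ f : Pt → ℝ, sSup ((fun e => wSum f u (extB _ e) (pathLen u v)) '' B)
        = B.toFinset.sup' hne' fun e => wSum f u (extB _ e) (pathLen u v) := by
      intro f
      rw [Finset.sup'_eq_csSup_image, Set.coe_toFinset]
    simp only [h2]
    exact measurable_sup' _ hne' _ fun e => measurable_wSum _ _ _
  · rw [Set.not_nonempty_iff_eq_empty] at hne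
    simp only [hne, Set.image_empty]
    exact measurable_const

lemma measurableSet_isRoot (x : Pt) :
    MeasurableSet {f : Pt → ℝ | IsRoot f flat (2 * 0) x} := by
  have hrw : {f : Pt → ℝ | IsRoot f flat (2 * 0) x} =
      {f : Pt → ℝ | IsCornerIdx flat (2 * 0)} ∩ ({f : Pt → ℝ | ltc (flat (2 * 0)) x} ∩
        ⋂ w' : ℤ, {f : Pt → ℝ | IsCornerIdx flat w' → ltc (flat w') x →
          lpt f (flat w' + dd) x ≤ lpt f (flat (2 * 0) + dd) x}) := by
    ext f
    simp only [Set.mem_setOf_eq, Set.mem_inter_iff, Set.mem_iInter, IsRoot]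
  rw [hrw]
  refine (MeasurableSet.const _).inter ((MeasurableSet.const _).inter
    (MeasurableSet.iInter fun w' => ?_))
  by_cases hq : IsCornerIdx flat w' ∧ ltc (flat w') x
  · have h2 : {f : Pt → ℝ | IsCornerIdx flat w' → ltc (flat w') x →
        lpt f (flat w' + dd) x ≤ lpt f (flat (2 * 0) + dd) x}
        = {f : Pt → ℝ | lpt f (flat w' + dd) x ≤ lpt f (flat (2 * 0) + dd) x} := by
      ext f; simp [hq.1, hq.2]
    rw [h2]
    exact measurableSet_le (measurable_lpt _ _) (measurable_lpt _ _)
  · have h2 : {f : Pt → ℝ | IsCornerIdx flat w' → ltc (flat w') x →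
        lpt f (flat w' + dd) x ≤ lpt f (flat (2 * 0) + dd) x} = Set.univ := by
      ext f
      simp only [Set.mem_setOf_eq, Set.mem_univ, iff_true]
      intro h1 h3
      exact absurd ⟨h1, h3⟩ hq
    rw [h2]
    exact MeasurableSet.univ

lemma measurableSet_heightGe (n : ℕ) : MeasurableSet {f : Pt → ℝ | HeightGe f 0 n} := by
  have hrw : {f : Pt → ℝ | HeightGe f 0 n} =
      ⋃ x : Pt, ({f : Pt → ℝ | x.1 + x.2 = (n : ℤ) + 1} ∩
        {f : Pt → ℝ | IsRoot f flat (2 * 0) x}) := by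
    ext f
    simp only [Set.mem_setOf_eq, Set.mem_iUnion, Set.mem_inter_iff, HeightGe]
  rw [hrw]
  exact MeasurableSet.iUnion fun x => (MeasurableSet.const _).inter (measurableSet_isRoot x)

end GFAux
namespace GFAux
open GF Set MeasureTheory ProbabilityTheory

variable {Ω : Type*} [MeasurableSpace Ω] (P : Measure Ω) [IsProbabilityMeasure P]
  (W : Pt → Ω → ℝ)

lemma aemeas (hW : IIDExp P W 1) (p : Pt) : AEMeasurable (W p) P := by
  by_contra h
  have h2 := hW.2 p
  rw [Measure.map_of_not_aemeasurable h] at h2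
  have h1 : (expMeasure 1) Set.univ = 1 :=
    (isProbabilityMeasure_expMeasure one_pos).measure_univ
  rw [← h2] at h1
  simp at h1

lemma marg (hW : IIDExp P W 1) (p : Pt) (A : Set ℝ) (hA : MeasurableSet A) :
    P (W p ⁻¹' A) = expMeasure 1 A := by
  rw [← hW.2 p, Measure.map_apply_of_aemeasurable (aemeas P W hW p) hA]

lemma law_box (hW : IIDExp P W 1) (c : Pt) (s : Finset Pt) (B : Pt → Set ℝ)
    (hB : ∀ p, MeasurableSet (B p)) :
    P (⋂ p ∈ s, (W (p + c)) ⁻¹' B p) = ∏ p ∈ s, (expMeasure 1) (B p) := by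
  have hind := (iIndepFun_iff_measure_inter_preimage_eq_mul.mp hW.1) (s.image (· + c))
    (sets := fun q => B (q - c)) (fun q _ => hB _)
  have hInter : (⋂ q ∈ s.image (· + c), W q ⁻¹' B (q - c)) = ⋂ p ∈ s, (W (p + c)) ⁻¹' B p := by
    ext ω
    simp only [Set.mem_iInter, Finset.mem_image, forall_exists_index, and_imp]
    constructor
    · intro h p hp
      have := h (p + c) p hp rfl
      rwa [add_sub_cancel_right] at this
    · rintro h q p hp rfl
      rw [add_sub_cancel_right]
      exact h p hp
  have hprod : ∏ q ∈ s.image (· + c), P (W q ⁻¹' B (q - c)) = ∏ p ∈ s, P (W (p + c) ⁻¹' B p) := by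
    rw [Finset.prod_image (fun p _ q _ h => by simpa using h)]
    refine Finset.prod_congr rfl fun p _ => by rw [add_sub_cancel_right]
  calc P (⋂ p ∈ s, (W (p + c)) ⁻¹' B p) = P (⋂ q ∈ s.image (· + c), W q ⁻¹' B (q - c)) := by
        rw [hInter]
    _ = ∏ q ∈ s.image (· + c), P (W q ⁻¹' B (q - c)) := hind
    _ = ∏ p ∈ s, P (W (p + c) ⁻¹' B p) := hprod
    _ = ∏ p ∈ s, (expMeasure 1) (B p) :=
        Finset.prod_congr rfl fun p _ => marg P W hW (p + c) (B p) (hB p)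

lemma aemeasurable_fam {ι : Type*} [Countable ι] (g : ι → Ω → ℝ)
    (hg : ∀ i, AEMeasurable (g i) P) : AEMeasurable (fun ω => fun i => g i ω) P := by
  refine ⟨fun ω => fun i => (hg i).mk _ ω,
    measurable_pi_lambda _ fun i => (hg i).measurable_mk, ?_⟩
  have h := MeasureTheory.ae_all_iff.mpr fun i => (hg i).ae_eq_mk
  filter_upwards [h] with ω hω
  funext i
  exact hω i

end GFAux
namespace GFAux
open GF Set MeasureTheory ProbabilityTheory

variable {Ω : Type*} [MeasurableSpace Ω] (P : Measure Ω) [IsProbabilityMeasure P]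
  (W : Pt → Ω → ℝ)

lemma map_box (hW : IIDExp P W 1) (c : Pt) (s : Finset Pt) (A : ∀ _ : s, Set ℝ)
    (hA : ∀ i, MeasurableSet (A i)) :
    Measure.map (fun ω => fun i : s => W (↑i + c) ω) P (Set.pi Set.univ A)
      = ∏ p ∈ s, (expMeasure 1) (if h : p ∈ s then A ⟨p, h⟩ else Set.univ) := by
  have haem : AEMeasurable (fun ω => fun i : s => W (↑i + c) ω) P :=
    aemeasurable_fam P (fun i : s => W (↑i + c)) (fun i => aemeas P W hW _)
  rw [Measure.map_apply_of_aemeasurable haem (MeasurableSet.univ_pi hA)]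
  have hpre : (fun ω => fun i : s => W (↑i + c) ω) ⁻¹' Set.pi Set.univ A
      = ⋂ p ∈ s, (W (p + c)) ⁻¹' (if h : p ∈ s then A ⟨p, h⟩ else Set.univ) := by
    ext ω
    simp only [Set.mem_preimage, Set.mem_pi, Set.mem_univ, forall_true_left, Set.mem_iInter]
    constructor
    · intro h p hp
      rw [dif_pos hp]
      exact h ⟨p, hp⟩
    · intro h i
      have := h ↑i i.2
      rwa [dif_pos i.2] at this
  rw [hpre]
  exact law_box P W hW c s _ (fun p => by
    by_cases hp : p ∈ s
    · rw [dif_pos hp]; exact hA _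
    · rw [dif_neg hp]; exact MeasurableSet.univ)

lemma finlaw (hW : IIDExp P W 1) (c c' : Pt) (s : Finset Pt) :
    Measure.map (fun ω => fun i : s => W (↑i + c) ω) P
      = Measure.map (fun ω => fun i : s => W (↑i + c') ω) P := by
  have haem : ∀ d : Pt, AEMeasurable (fun ω => fun i : s => W (↑i + d) ω) P := fun d =>
    aemeasurable_fam P (fun i : s => W (↑i + d)) (fun i => aemeas P W hW _)
  haveI h1 : IsProbabilityMeasure (Measure.map (fun ω => fun i : s => W (↑i + c) ω) P) :=
    Measure.isProbabilityMeasure_map (haem c)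
  haveI h2 : IsProbabilityMeasure (Measure.map (fun ω => fun i : s => W (↑i + c') ω) P) :=
    Measure.isProbabilityMeasure_map (haem c')
  refine ext_of_generate_finite _ generateFrom_pi.symm isPiSystem_pi ?_ ?_
  · rintro _ ⟨A, hA, rfl⟩
    have hA' : ∀ i, MeasurableSet (A i) := fun i => hA i (Set.mem_univ i)
    rw [map_box P W hW c s A hA', map_box P W hW c' s A hA']
  · rw [measure_univ, measure_univ]

lemma fulllaw (hW : IIDExp P W 1) (c : Pt) :
    Measure.map (fun ω => fun p : Pt => W (p + c) ω) P
      = Measure.map (fun ω => fun p : Pt => W (p + 0) ω) P := by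
  have haem : ∀ d : Pt, AEMeasurable (fun ω => fun p : Pt => W (p + d) ω) P := fun d =>
    aemeasurable_fam P (fun p : Pt => W (p + d)) (fun p => aemeas P W hW _)
  haveI h1 : IsProbabilityMeasure (Measure.map (fun ω => fun p : Pt => W (p + c) ω) P) :=
    Measure.isProbabilityMeasure_map (haem c)
  haveI h2 : IsProbabilityMeasure (Measure.map (fun ω => fun p : Pt => W (p + 0) ω) P) :=
    Measure.isProbabilityMeasure_map (haem 0)
  refine ext_of_generate_finite _ generateFrom_measurableCylinders.symm
    isPiSystem_measurableCylinders ?_ ?_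
  · rintro t ht
    obtain ⟨s, S0, hS0, rfl⟩ := (mem_measurableCylinders t).mp ht
    have hcyl : ∀ d : Pt, (fun ω => fun p : Pt => W (p + d) ω) ⁻¹' cylinder s S0
        = (fun ω => fun i : s => W (↑i + d) ω) ⁻¹' S0 := fun d => rfl
    rw [Measure.map_apply_of_aemeasurable (haem c) hS0.cylinder,
      Measure.map_apply_of_aemeasurable (haem 0) hS0.cylinder, hcyl, hcyl,
      ← Measure.map_apply_of_aemeasurable (aemeasurable_fam P _ (fun i : s => aemeas P W hW _)) hS0,
      ← Measure.map_apply_of_aemeasurable (aemeasurable_fam P _ (fun i : s => aemeas P W hW _)) hS0,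
      finlaw P W hW c 0 s]
  · rw [measure_univ, measure_univ]

end GFAux
open GF GFAux MeasureTheory ProbabilityTheory

theorem flat_substrate_root_location_union_bound'
    {Ω : Type*} [MeasurableSpace Ω] (P : Measure Ω) [IsProbabilityMeasure P]
    (W : Pt → Ω → ℝ) (hW : IIDExp P W 1) :
    ∀ m n : ℕ, 1 ≤ m → 1 ≤ n →
      P {ω | ∃ z : ℤ, |z| < (m : ℤ) ∧
          IsRoot (fun p => W p ω) flat (2 * z) ((n : ℤ), (n : ℤ))} ≤
        2 * (m : ENNReal) * P {ω | HeightGe (fun p => W p ω) 0 n} := by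
  intro m n hm hn
  set S := {f : Pt → ℝ | HeightGe f 0 n} with hS
  -- union bound over corners
  have hsub : {ω | ∃ z : ℤ, |z| < (m : ℤ) ∧
      IsRoot (fun p => W p ω) flat (2 * z) ((n : ℤ), (n : ℤ))}
      ⊆ ⋃ z ∈ Finset.Ioo (-(m : ℤ)) (m : ℤ), {ω | HeightGe (fun p => W p ω) z n} := by
    rintro ω ⟨z, hz, hroot⟩
    rw [abs_lt] at hz
    exact Set.mem_biUnion (Finset.mem_Ioo.mpr ⟨hz.1, hz.2⟩)
      (root_to_height (fun p => W p ω) z n hn hroot)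
  -- each height event has the same probability as the one at the origin
  have hinv : ∀ z : ℤ, P {ω | HeightGe (fun p => W p ω) z n}
      = P {ω | HeightGe (fun p => W p ω) 0 n} := by
    intro z
    have hev : ∀ c : Pt, {ω | HeightGe (fun p => W (p + c) ω) 0 n}
        = (fun ω => fun p : Pt => W (p + c) ω) ⁻¹' S := fun c => rfl
    have h1 : {ω | HeightGe (fun p => W p ω) z n}
        = (fun ω => fun p : Pt => W (p + ((z, -z) : Pt)) ω) ⁻¹' S := by
      ext ω
      rw [Set.mem_setOf_eq, heightGe_shift (fun p => W p ω) z n]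
      exact Iff.rfl
    have h0 : {ω | HeightGe (fun p => W p ω) 0 n}
        = (fun ω => fun p : Pt => W (p + (0 : Pt)) ω) ⁻¹' S := by
      ext ω
      rw [Set.mem_setOf_eq]
      constructor
      · intro h
        show HeightGe (fun p => W (p + 0) ω) 0 n
        have : (fun p : Pt => W (p + 0) ω) = fun p => W p ω := by
          funext p; rw [add_zero]
        rwa [this]
      · intro h
        have h' : HeightGe (fun p => W (p + 0) ω) 0 n := h
        have : (fun p : Pt => W (p + 0) ω) = fun p => W p ω := by
          funext p; rw [add_zero]
        rwa [this] at h'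
    have haem : ∀ c : Pt, AEMeasurable (fun ω => fun p : Pt => W (p + c) ω) P := fun c =>
      aemeasurable_fam P (fun p : Pt => W (p + c)) (fun p => aemeas P W hW _)
    have hSm : MeasurableSet S := measurableSet_heightGe n
    rw [h1, h0, ← Measure.map_apply_of_aemeasurable (haem _) hSm,
      ← Measure.map_apply_of_aemeasurable (haem 0) hSm, fulllaw P W hW ((z, -z) : Pt)]
  calc P {ω | ∃ z : ℤ, |z| < (m : ℤ) ∧
        IsRoot (fun p => W p ω) flat (2 * z) ((n : ℤ), (n : ℤ))}
      ≤ P (⋃ z ∈ Finset.Ioo (-(m : ℤ)) (m : ℤ), {ω | HeightGe (fun p => W p ω) z n}) :=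
        measure_mono hsub
    _ ≤ ∑ z ∈ Finset.Ioo (-(m : ℤ)) (m : ℤ), P {ω | HeightGe (fun p => W p ω) z n} :=
        measure_biUnion_finset_le _ _
    _ = (Finset.Ioo (-(m : ℤ)) (m : ℤ)).card • P {ω | HeightGe (fun p => W p ω) 0 n} := by
        rw [← Finset.sum_const]
        exact Finset.sum_congr rfl fun z _ => hinv z
    _ ≤ 2 * (m : ENNReal) * P {ω | HeightGe (fun p => W p ω) 0 n} := by
        rw [Int.card_Ioo]
        have hcard : (((m : ℤ) - -(m : ℤ) - 1).toNat : ENNReal) ≤ 2 * (m : ENNReal) := by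
          have h2 : ((m : ℤ) - -(m : ℤ) - 1).toNat ≤ 2 * m := by omega
          calc (((m : ℤ) - -(m : ℤ) - 1).toNat : ENNReal) ≤ ((2 * m : ℕ) : ENNReal) := by
                exact_mod_cast h2
            _ = 2 * (m : ENNReal) := by push_cast; ring
        rw [nsmul_eq_mul]
        exact mul_le_mul_left hcard _

open GF
/-- For exponential LPP with the flat substrate whose concave corners form the antidiagonal:
if `Z(n)` denotes the location of the root of the point `(n, n)` (i.e.
`Φ(n,n) = (Z(n), -Z(n))`), then `P(|Z(n)| < m) ≤ 2 m ⬝ P(H₀ ≥ n)` for all `m, n ≥ 1`. -/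
theorem flat_substrate_root_location_union_bound
    {Ω : Type*} [MeasurableSpace Ω] (P : Measure Ω) [IsProbabilityMeasure P]
    (W : Pt → Ω → ℝ) (hW : IIDExp P W 1) :
    ∀ m n : ℕ, 1 ≤ m → 1 ≤ n →
      P {ω | ∃ z : ℤ, |z| < (m : ℤ) ∧
          IsRoot (fun p => W p ω) flat (2 * z) ((n : ℤ), (n : ℤ))} ≤
        2 * (m : ENNReal) * P {ω | HeightGe (fun p => W p ω) 0 n} :=
  flat_substrate_root_location_union_bound' P W hW
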